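/- Let M ≥ 1, let 0 = x₀ < ⋯ < x_M = 1 be a partition of [0,1], T > 0, γ > 0, and let W : ℝ → ℝ be continuously differentiable. For each cell i ∈ {0,…,M−1} let ρᵢ, vᵢ, τᵢ, qᵢ : [0,T] × [xᵢ, xᵢ₊₁] → ℝ be twice continuously differentiable, with v₀(t,0) = v_{M−1}(t,1) = 0 and q₀(t,0) = q_{M−1}(t,1) = 0 for all t. Assume that for every t ∈ [0,T]: (1) Σᵢ ∫ (∂ₜρᵢ + ∂ₓ(ρᵢvᵢ)) τᵢ dx = Σⱼ [ρv]ⱼ {τ}ⱼ; (2) Σᵢ ∫ ( ρᵢ∂ₜvᵢ + ∂ₓ(ρᵢvᵢ²) − ∂ₓ(ρᵢvᵢ)vᵢ + ρᵢ∂ₓτᵢ − ½ρᵢ∂ₓ(vᵢ²) ) vᵢ dx = Σⱼ [τ]ⱼ {ρv}ⱼ; (3) Σᵢ ∫ ( τᵢ − W'(ρᵢ) + γ∂ₓqᵢ − ½vᵢ² ) ∂ₜρᵢ dx = γ Σⱼ [q]ⱼ {∂ₜρ}ⱼ; (4) Σᵢ ∫ ( ∂ₜqᵢ − ∂ₜ∂ₓρᵢ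 ) qᵢ dx = − Σⱼ [∂ₜρ]ⱼ {q}ⱼ; where all cell integrals are over [xᵢ, xᵢ₊₁] and all node sums over j = 1,…,M−1. Then the discrete energy t ↦ Σᵢ ∫_{xᵢ}^{xᵢ₊₁} [ W(ρᵢ) + ½ρᵢvᵢ² + (γ/2)qᵢ² ] dx is constant on [0,T]. -/

import Mathlib

open Set MeasureTheory

/-- Time partial derivative of a function `f t x` of time and one space variable. -/
noncomputable def pt (f : ℝ → ℝ → ℝ) (t x : ℝ) : ℝ := deriv (fun s => f s x) t

/-- Space partial derivative of a function `f t x` of time and one space variable. -/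
noncomputable def px (f : ℝ → ℝ → ℝ) (t x : ℝ) : ℝ := deriv (fun y => f t y) x




lemma hasDerivAt_fst {f : ℝ → ℝ → ℝ} (hf : ContDiff ℝ 1 (fun z : ℝ × ℝ => f z.1 z.2))
    (t y : ℝ) :
    HasDerivAt (fun s => f s y) (fderiv ℝ (fun z : ℝ × ℝ => f z.1 z.2) (t, y) (1, 0)) t := by
  have h := (hf.differentiable one_ne_zero (t, y)).hasFDerivAt
  have h2 : HasDerivAt (fun s : ℝ => (s, y)) ((1 : ℝ), (0 : ℝ)) t :=
    HasDerivAt.prodMk (hasDerivAt_id t) (hasDerivAt_const t y)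
  exact h.comp_hasDerivAt t h2

lemma hasDerivAt_snd {f : ℝ → ℝ → ℝ} (hf : ContDiff ℝ 1 (fun z : ℝ × ℝ => f z.1 z.2))
    (t y : ℝ) :
    HasDerivAt (fun z => f t z) (fderiv ℝ (fun z : ℝ × ℝ => f z.1 z.2) (t, y) (0, 1)) y := by
  have h := (hf.differentiable one_ne_zero (t, y)).hasFDerivAt
  have h2 : HasDerivAt (fun z : ℝ => (t, z)) ((0 : ℝ), (1 : ℝ)) y :=
    HasDerivAt.prodMk (hasDerivAt_const y t) (hasDerivAt_id y)
  exact h.comp_hasDerivAt y h2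

lemma pt_eq {f : ℝ → ℝ → ℝ} (hf : ContDiff ℝ 1 (fun z : ℝ × ℝ => f z.1 z.2)) (t y : ℝ) :
    pt f t y = fderiv ℝ (fun z : ℝ × ℝ => f z.1 z.2) (t, y) (1, 0) :=
  (hasDerivAt_fst hf t y).deriv

lemma px_eq {f : ℝ → ℝ → ℝ} (hf : ContDiff ℝ 1 (fun z : ℝ × ℝ => f z.1 z.2)) (t y : ℝ) :
    px f t y = fderiv ℝ (fun z : ℝ × ℝ => f z.1 z.2) (t, y) (0, 1) :=
  (hasDerivAt_snd hf t y).deriv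

lemma hasDerivAt_pt {f : ℝ → ℝ → ℝ} (hf : ContDiff ℝ 1 (fun z : ℝ × ℝ => f z.1 z.2))
    (t y : ℝ) : HasDerivAt (fun s => f s y) (pt f t y) t := by
  rw [pt_eq hf]; exact hasDerivAt_fst hf t y

lemma hasDerivAt_px {f : ℝ → ℝ → ℝ} (hf : ContDiff ℝ 1 (fun z : ℝ × ℝ => f z.1 z.2))
    (t y : ℝ) : HasDerivAt (fun z => f t z) (px f t y) y := by
  rw [px_eq hf]; exact hasDerivAt_snd hf t y

lemma contDiff_pt {f : ℝ → ℝ → ℝ} (hf : ContDiff ℝ 2 (fun z : ℝ × ℝ => f z.1 z.2)) :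
    ContDiff ℝ 1 (fun z : ℝ × ℝ => pt f z.1 z.2) := by
  have h1 : ContDiff ℝ 1 (fderiv ℝ (fun z : ℝ × ℝ => f z.1 z.2)) :=
    hf.fderiv_right (by norm_num)
  have h2 : ContDiff ℝ 1 (fun z : ℝ × ℝ =>
      (ContinuousLinearMap.apply ℝ ℝ ((1 : ℝ), (0 : ℝ)))
        (fderiv ℝ (fun z : ℝ × ℝ => f z.1 z.2) z)) :=
    (ContinuousLinearMap.apply ℝ ℝ ((1 : ℝ), (0 : ℝ))).contDiff.comp h1
  have e : (fun z : ℝ × ℝ => pt f z.1 z.2) = fun z : ℝ × ℝ =>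
      (ContinuousLinearMap.apply ℝ ℝ ((1 : ℝ), (0 : ℝ)))
        (fderiv ℝ (fun z : ℝ × ℝ => f z.1 z.2) z) := by
    funext z; exact pt_eq (hf.of_le one_le_two) z.1 z.2
  rw [e]; exact h2

lemma contDiff_px {f : ℝ → ℝ → ℝ} (hf : ContDiff ℝ 2 (fun z : ℝ × ℝ => f z.1 z.2)) :
    ContDiff ℝ 1 (fun z : ℝ × ℝ => px f z.1 z.2) := by
  have h1 : ContDiff ℝ 1 (fderiv ℝ (fun z : ℝ × ℝ => f z.1 z.2)) :=
    hf.fderiv_right (by norm_num)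
  have h2 : ContDiff ℝ 1 (fun z : ℝ × ℝ =>
      (ContinuousLinearMap.apply ℝ ℝ ((0 : ℝ), (1 : ℝ)))
        (fderiv ℝ (fun z : ℝ × ℝ => f z.1 z.2) z)) :=
    (ContinuousLinearMap.apply ℝ ℝ ((0 : ℝ), (1 : ℝ))).contDiff.comp h1
  have e : (fun z : ℝ × ℝ => px f z.1 z.2) = fun z : ℝ × ℝ =>
      (ContinuousLinearMap.apply ℝ ℝ ((0 : ℝ), (1 : ℝ)))
        (fderiv ℝ (fun z : ℝ × ℝ => f z.1 z.2) z) := by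
    funext z; exact px_eq (hf.of_le one_le_two) z.1 z.2
  rw [e]; exact h2

lemma continuous_pt {f : ℝ → ℝ → ℝ} (hf : ContDiff ℝ 1 (fun z : ℝ × ℝ => f z.1 z.2)) :
    Continuous (fun z : ℝ × ℝ => pt f z.1 z.2) := by
  have h1 : Continuous (fderiv ℝ (fun z : ℝ × ℝ => f z.1 z.2)) :=
    (hf.fderiv_right (by norm_num : (0:WithTop ℕ∞) + 1 ≤ 1)).continuous
  have h2 : Continuous (fun z : ℝ × ℝ =>
      fderiv ℝ (fun z : ℝ × ℝ => f z.1 z.2) z ((1 : ℝ), (0 : ℝ))) :=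
    ((ContinuousLinearMap.apply ℝ ℝ ((1 : ℝ), (0 : ℝ))).continuous).comp h1
  exact h2.congr fun z => (pt_eq hf z.1 z.2).symm

lemma continuous_px' {f : ℝ → ℝ → ℝ} (hf : ContDiff ℝ 1 (fun z : ℝ × ℝ => f z.1 z.2)) :
    Continuous (fun z : ℝ × ℝ => px f z.1 z.2) := by
  have h1 : Continuous (fderiv ℝ (fun z : ℝ × ℝ => f z.1 z.2)) :=
    (hf.fderiv_right (by norm_num : (0:WithTop ℕ∞) + 1 ≤ 1)).continuous
  have h2 : Continuous (fun z : ℝ × ℝ =>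
      fderiv ℝ (fun z : ℝ × ℝ => f z.1 z.2) z ((0 : ℝ), (1 : ℝ))) :=
    ((ContinuousLinearMap.apply ℝ ℝ ((0 : ℝ), (1 : ℝ))).continuous).comp h1
  exact h2.congr fun z => (px_eq hf z.1 z.2).symm

lemma clairaut {f : ℝ → ℝ → ℝ} (hf : ContDiff ℝ 2 (fun z : ℝ × ℝ => f z.1 z.2)) (t x : ℝ) :
    pt (px f) t x = px (pt f) t x := by
  set F := fun z : ℝ × ℝ => f z.1 z.2 with hF
  set D := fderiv ℝ F with hD
  have hD1 : ContDiff ℝ 1 D := hf.fderiv_right (by norm_num)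
  have hDd : ∀ z, HasFDerivAt F (D z) z := fun z =>
    (hf.differentiable two_ne_zero z).hasFDerivAt
  have hD'' : HasFDerivAt D (fderiv ℝ D (t, x)) (t, x) :=
    (hD1.differentiable one_ne_zero (t, x)).hasFDerivAt
  have symm := second_derivative_symmetric hDd hD'' ((1:ℝ), (0:ℝ)) ((0:ℝ), (1:ℝ))
  -- pt (px f) t x
  have h1 : HasDerivAt (fun s : ℝ => D (s, x)) (fderiv ℝ D (t, x) (1, 0)) t :=
    hD''.comp_hasDerivAt t (HasDerivAt.prodMk (hasDerivAt_id t) (hasDerivAt_const t x))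
  have h1' : HasDerivAt (fun s : ℝ => D (s, x) ((0:ℝ), (1:ℝ)))
      ((fderiv ℝ D (t, x) (1, 0)) (0, 1)) t :=
    ((ContinuousLinearMap.apply ℝ ℝ ((0:ℝ), (1:ℝ))).hasFDerivAt).comp_hasDerivAt t h1
  have h2 : HasDerivAt (fun z : ℝ => D (t, z)) (fderiv ℝ D (t, x) (0, 1)) x :=
    hD''.comp_hasDerivAt x (HasDerivAt.prodMk (hasDerivAt_const x t) (hasDerivAt_id x))
  have h2' : HasDerivAt (fun z : ℝ => D (t, z) ((1:ℝ), (0:ℝ)))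
      ((fderiv ℝ D (t, x) (0, 1)) (1, 0)) x :=
    ((ContinuousLinearMap.apply ℝ ℝ ((1:ℝ), (0:ℝ))).hasFDerivAt).comp_hasDerivAt x h2
  have e1 : pt (px f) t x = (fderiv ℝ D (t, x) (1, 0)) (0, 1) := by
    have : (fun s : ℝ => px f s x) = fun s : ℝ => D (s, x) ((0:ℝ), (1:ℝ)) := by
      funext s; exact px_eq (hf.of_le one_le_two) s x
    rw [pt, this]; exact h1'.deriv
  have e2 : px (pt f) t x = (fderiv ℝ D (t, x) (0, 1)) (1, 0) := by
    have : (fun z : ℝ => pt f t z) = fun z : ℝ => D (t, z) ((1:ℝ), (0:ℝ)) := by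
      funext z; exact pt_eq (hf.of_le one_le_two) t z
    rw [px, this]; exact h2'.deriv
  rw [e1, e2, symm]
lemma continuous_slice {f : ℝ → ℝ → ℝ} (hf : Continuous (fun z : ℝ × ℝ => f z.1 z.2))
    (t : ℝ) : Continuous (f t) := hf.comp (Continuous.prodMk_right t)

lemma hasDerivAt_integral_param {f : ℝ → ℝ → ℝ}
    (hf : ContDiff ℝ 1 (fun z : ℝ × ℝ => f z.1 z.2)) (a b t₀ : ℝ) :
    HasDerivAt (fun t => ∫ y in a..b, f t y) (∫ y in a..b, pt f t₀ y) t₀ := by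
  have hcpt := continuous_pt hf
  obtain ⟨C, hC⟩ := (IsCompact.exists_bound_of_continuousOn
    ((isCompact_Icc (a := t₀ - 1) (b := t₀ + 1)).prod (isCompact_uIcc (a := a) (b := b)))
    hcpt.continuousOn)
  refine (intervalIntegral.hasDerivAt_integral_of_dominated_loc_of_deriv_le
    (F := fun t y => f t y) (F' := fun t y => pt f t y) (bound := fun _ => C)
    (s := Metric.ball t₀ 1) (Metric.ball_mem_nhds t₀ one_pos) ?_ ?_ ?_ ?_ ?_ ?_).2
  · exact Filter.Eventually.of_forall fun x =>
      ((continuous_slice hf.continuous x).aestronglyMeasurable)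
  · exact (continuous_slice hf.continuous t₀).intervalIntegrable a b
  · exact ((continuous_slice hcpt t₀).aestronglyMeasurable)
  · refine Filter.Eventually.of_forall fun y hy x hx => ?_
    have : (x, y) ∈ Icc (t₀ - 1) (t₀ + 1) ×ˢ uIcc a b := by
      constructor
      · have := Metric.mem_ball.mp hx
        rw [Real.dist_eq] at this
        constructor <;> [linarith [abs_lt.mp this |>.1]; linarith [abs_lt.mp this |>.2]]
      · exact uIoc_subset_uIcc hy
    exact hC (x, y) this
  · exact intervalIntegrable_const
  · exact Filter.Eventually.of_forall fun y _ x _ => hasDerivAt_pt hf x y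

lemma integral_px {f : ℝ → ℝ → ℝ}
    (hf : ContDiff ℝ 1 (fun z : ℝ × ℝ => f z.1 z.2)) (t a b : ℝ) :
    ∫ y in a..b, px f t y = f t b - f t a := by
  have : (fun y => px f t y) = deriv (fun z => f t z) := rfl
  rw [this]
  refine intervalIntegral.integral_deriv_eq_sub (fun x _ => (hasDerivAt_px hf t x).differentiableAt) ?_
  rw [← this]
  exact (continuous_slice (continuous_px' hf) t).intervalIntegrable a b
lemma telescope {M : ℕ} (hM : 1 ≤ M) (A B : ℕ → ℝ) :
    ∑ i ∈ Finset.range M, (A i - B i)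
      = A (M - 1) - B 0 + ∑ j ∈ Finset.Ico 1 M, (A (j - 1) - B j) := by
  induction M with
  | zero => omega
  | succ m ih =>
    rcases Nat.lt_or_ge 1 (m + 1) with h | h
    · have hm : 1 ≤ m := by omega
      rw [Finset.sum_range_succ, ih hm, Finset.sum_Ico_succ_top hm]
      have : m + 1 - 1 = m := by omega
      rw [this]
      ring
    · have : m = 0 := by omega
      subst this
      simp

lemma pointwise_identity (W : ℝ → ℝ) (hW : ContDiff ℝ 1 W) (γ : ℝ)
    (ρ v τ q : ℝ → ℝ → ℝ)
    (hρ : ContDiff ℝ 2 (fun z : ℝ × ℝ => ρ z.1 z.2))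
    (hv : ContDiff ℝ 2 (fun z : ℝ × ℝ => v z.1 z.2))
    (hτ : ContDiff ℝ 2 (fun z : ℝ × ℝ => τ z.1 z.2))
    (hq : ContDiff ℝ 2 (fun z : ℝ × ℝ => q z.1 z.2)) (t y : ℝ) :
    pt (fun s z => W (ρ s z) + (1/2) * ρ s z * (v s z) ^ 2 + (γ/2) * (q s z) ^ 2) t y
    = -((τ t y - deriv W (ρ t y) + γ * px q t y - (1/2) * (v t y) ^ 2) * pt ρ t y)
      + (pt ρ t y + px (fun s z => ρ s z * v s z) t y) * τ t y
      + ((ρ t y * pt v t y + px (fun s z => ρ s z * (v s z) ^ 2) t y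
          - px (fun s z => ρ s z * v s z) t y * v t y + ρ t y * px τ t y
          - (1/2) * ρ t y * px (fun s z => (v s z) ^ 2) t y) * v t y)
      + γ * ((pt q t y - pt (px ρ) t y) * q t y)
      - px (fun s z => ρ s z * v s z * τ s z) t y
      + γ * px (fun s z => q s z * pt ρ s z) t y := by
  have hρ1 := hρ.of_le one_le_two
  have hv1 := hv.of_le one_le_two
  have hτ1 := hτ.of_le one_le_two
  have hq1 := hq.of_le one_le_two
  -- time derivatives
  have Hρ := hasDerivAt_pt hρ1 t y
  have Hv := hasDerivAt_pt hv1 t y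
  have Hq := hasDerivAt_pt hq1 t y
  -- space derivatives
  have Xρ := hasDerivAt_px hρ1 t y
  have Xv := hasDerivAt_px hv1 t y
  have Xτ := hasDerivAt_px hτ1 t y
  have Xq := hasDerivAt_px hq1 t y
  have XPρ := hasDerivAt_px (contDiff_pt hρ) t y
  -- evaluate pt of the energy density
  have HW : HasDerivAt (fun s => W (ρ s y)) (deriv W (ρ t y) * pt ρ t y) t :=
    ((hW.differentiable one_ne_zero (ρ t y)).hasDerivAt).comp t Hρ
  have H2 : HasDerivAt (fun s => (1/2 : ℝ) * ρ s y * (v s y) ^ 2)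
      ((1/2) * pt ρ t y * (v t y) ^ 2
        + (1/2) * ρ t y * ((2 : ℕ) * (v t y) ^ 1 * pt v t y)) t :=
    ((Hρ.const_mul (1/2 : ℝ)).mul (Hv.pow 2))
  have H3 : HasDerivAt (fun s => (γ/2 : ℝ) * (q s y) ^ 2)
      ((γ/2) * ((2 : ℕ) * (q t y) ^ 1 * pt q t y)) t := (Hq.pow 2).const_mul (γ/2)
  have e0 : pt (fun s z => W (ρ s z) + (1/2) * ρ s z * (v s z) ^ 2 + (γ/2) * (q s z) ^ 2) t y
      = deriv W (ρ t y) * pt ρ t y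
        + ((1/2) * pt ρ t y * (v t y) ^ 2
            + (1/2) * ρ t y * ((2 : ℕ) * (v t y) ^ 1 * pt v t y))
        + (γ/2) * ((2 : ℕ) * (q t y) ^ 1 * pt q t y) := ((HW.add H2).add H3).deriv
  -- evaluate the spatial derivatives of products
  have e1 : px (fun s z => ρ s z * v s z) t y = px ρ t y * v t y + ρ t y * px v t y :=
    (Xρ.mul Xv).deriv
  have e2 : px (fun s z => ρ s z * (v s z) ^ 2) t y
      = px ρ t y * (v t y) ^ 2 + ρ t y * ((2 : ℕ) * (v t y) ^ 1 * px v t y) :=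
    (Xρ.mul (Xv.pow 2)).deriv
  have e3 : px (fun s z => (v s z) ^ 2) t y = (2 : ℕ) * (v t y) ^ 1 * px v t y :=
    (Xv.pow 2).deriv
  have e4 : px (fun s z => ρ s z * v s z * τ s z) t y
      = (px ρ t y * v t y + ρ t y * px v t y) * τ t y + ρ t y * v t y * px τ t y :=
    ((Xρ.mul Xv).mul Xτ).deriv
  have e5 : px (fun s z => q s z * pt ρ s z) t y
      = px q t y * pt ρ t y + q t y * px (pt ρ) t y := (Xq.mul XPρ).deriv
  have e6 := clairaut hρ t y
  rw [e0, e1, e2, e3, e4, e5, e6]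
  push_cast
  ring
lemma integral_comb {a b γ : ℝ} {g f1 f2 f3 f4 f5 f6 : ℝ → ℝ}
    (hg : ∀ y, g y = -f1 y + f2 y + f3 y + γ * f4 y - f5 y + γ * f6 y)
    (h1 : Continuous f1) (h2 : Continuous f2) (h3 : Continuous f3)
    (h4 : Continuous f4) (h5 : Continuous f5) (h6 : Continuous f6) :
    ∫ y in a..b, g y
      = -(∫ y in a..b, f1 y) + (∫ y in a..b, f2 y) + (∫ y in a..b, f3 y)
        + γ * (∫ y in a..b, f4 y) - (∫ y in a..b, f5 y) + γ * (∫ y in a..b, f6 y) := by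
  have hg' : g = fun y => -f1 y + f2 y + f3 y + γ * f4 y - f5 y + γ * f6 y := funext hg
  have i1 : IntervalIntegrable (fun y => -f1 y) volume a b := h1.neg.intervalIntegrable (μ := volume) a b
  have i2 := h2.intervalIntegrable (μ := volume) a b
  have i3 := h3.intervalIntegrable (μ := volume) a b
  have i4 : IntervalIntegrable (fun y => γ * f4 y) volume a b :=
    (continuous_const.mul h4).intervalIntegrable (μ := volume) a b
  have i5 := h5.intervalIntegrable (μ := volume) a b
  have i6 : IntervalIntegrable (fun y => γ * f6 y) volume a b :=
    (continuous_const.mul h6).intervalIntegrable (μ := volume) a b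
  rw [hg', intervalIntegral.integral_add (((((i1.add i2).add i3).add i4).sub i5)) i6,
    intervalIntegral.integral_sub ((((i1.add i2).add i3).add i4)) i5,
    intervalIntegral.integral_add (((i1.add i2).add i3)) i4,
    intervalIntegral.integral_add ((i1.add i2)) i3,
    intervalIntegral.integral_add i1 i2,
    intervalIntegral.integral_neg, intervalIntegral.integral_const_mul,
    intervalIntegral.integral_const_mul]

/-- Energy conservation for the spatially semidiscrete DG scheme for the
Euler–Korteweg system (`μ = 0`) on a partition `0 = x₀ < ⋯ < x_M = 1` with the
energy-consistent fluxes, the four DG equations being tested respectively with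
`τ_h`, `v_h`, `∂ₜρ_h` and (after time differentiation) `q_h`: the discrete
energy `Σᵢ ∫ W(ρᵢ) + ½ρᵢvᵢ² + (γ/2)qᵢ²` is constant on `[0,T]`. -/
theorem dg_semidiscrete_energy_conservation
    (M : ℕ) (hM : 1 ≤ M) (xp : ℕ → ℝ)
    (hx0 : xp 0 = 0) (hxM : xp M = 1)
    (hx : ∀ i < M, xp i < xp (i + 1))
    (T γ : ℝ) (hT : 0 < T) (hγ : 0 < γ)
    (W : ℝ → ℝ) (hW : ContDiff ℝ 1 W)
    (ρ v τ q : ℕ → ℝ → ℝ → ℝ)  -- cell index, time, position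
    (hρ : ∀ i < M, ContDiff ℝ 2 (fun z : ℝ × ℝ => ρ i z.1 z.2))
    (hv : ∀ i < M, ContDiff ℝ 2 (fun z : ℝ × ℝ => v i z.1 z.2))
    (hτ : ∀ i < M, ContDiff ℝ 2 (fun z : ℝ × ℝ => τ i z.1 z.2))
    (hq : ∀ i < M, ContDiff ℝ 2 (fun z : ℝ × ℝ => q i z.1 z.2))
    -- boundary conditions
    (hbv : ∀ t ∈ Icc (0:ℝ) T, v 0 t 0 = 0 ∧ v (M - 1) t 1 = 0)
    (hbq : ∀ t ∈ Icc (0:ℝ) T, q 0 t 0 = 0 ∧ q (M - 1) t 1 = 0)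
    -- (1) mass equation tested with τ
    (h1 : ∀ t ∈ Icc (0:ℝ) T,
      ∑ i ∈ Finset.range M, ∫ y in xp i..xp (i + 1),
          ((pt (ρ i) t y + px (fun s z => ρ i s z * v i s z) t y) * τ i t y)
        = ∑ j ∈ Finset.Ico 1 M,
            (ρ (j - 1) t (xp j) * v (j - 1) t (xp j)
              - ρ j t (xp j) * v j t (xp j))
            * ((τ (j - 1) t (xp j) + τ j t (xp j)) / 2))
    -- (2) momentum equation tested with v
    (h2 : ∀ t ∈ Icc (0:ℝ) T,
      ∑ i ∈ Finset.range M, ∫ y in xp i..xp (i + 1),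
          ((ρ i t y * pt (v i) t y
              + px (fun s z => ρ i s z * (v i s z) ^ 2) t y
              - px (fun s z => ρ i s z * v i s z) t y * v i t y
              + ρ i t y * px (τ i) t y
              - (1/2) * ρ i t y * px (fun s z => (v i s z) ^ 2) t y)
            * v i t y)
        = ∑ j ∈ Finset.Ico 1 M,
            (τ (j - 1) t (xp j) - τ j t (xp j))
            * ((ρ (j - 1) t (xp j) * v (j - 1) t (xp j)
                + ρ j t (xp j) * v j t (xp j)) / 2))
    -- (3) chemical-potential equation tested with ∂ₜρ
    (h3 : ∀ t ∈ Icc (0:ℝ) T,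
      ∑ i ∈ Finset.range M, ∫ y in xp i..xp (i + 1),
          ((τ i t y - deriv W (ρ i t y) + γ * px (q i) t y
              - (1/2) * (v i t y) ^ 2) * pt (ρ i) t y)
        = γ * ∑ j ∈ Finset.Ico 1 M,
            (q (j - 1) t (xp j) - q j t (xp j))
            * ((pt (ρ (j - 1)) t (xp j) + pt (ρ j) t (xp j)) / 2))
    -- (4) time-differentiated gradient equation tested with q
    (h4 : ∀ t ∈ Icc (0:ℝ) T,
      ∑ i ∈ Finset.range M, ∫ y in xp i..xp (i + 1),
          ((pt (q i) t y - pt (px (ρ i)) t y) * q i t y)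
        = -∑ j ∈ Finset.Ico 1 M,
            (pt (ρ (j - 1)) t (xp j) - pt (ρ j) t (xp j))
            * ((q (j - 1) t (xp j) + q j t (xp j)) / 2)) :
    ∀ t ∈ Icc (0:ℝ) T,
      (∑ i ∈ Finset.range M, ∫ y in xp i..xp (i + 1),
          (W (ρ i t y) + (1/2) * ρ i t y * (v i t y) ^ 2
            + (γ/2) * (q i t y) ^ 2))
        = ∑ i ∈ Finset.range M, ∫ y in xp i..xp (i + 1),
            (W (ρ i 0 y) + (1/2) * ρ i 0 y * (v i 0 y) ^ 2
              + (γ/2) * (q i 0 y) ^ 2) := by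
  have hG1 : ∀ i < M, ContDiff ℝ 1 (fun z : ℝ × ℝ =>
      W (ρ i z.1 z.2) + (1/2) * ρ i z.1 z.2 * (v i z.1 z.2) ^ 2
        + (γ/2) * (q i z.1 z.2) ^ 2) := by
    intro i hi
    have hρ1 := (hρ i hi).of_le one_le_two
    have hv1 := (hv i hi).of_le one_le_two
    have hq1 := (hq i hi).of_le one_le_two
    exact ((hW.comp hρ1).add ((contDiff_const.mul hρ1).mul (hv1.pow 2))).add
      (contDiff_const.mul (hq1.pow 2))
  have hEd : ∀ s : ℝ, HasDerivAt
      (fun t => ∑ i ∈ Finset.range M, ∫ y in xp i..xp (i + 1),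
        (W (ρ i t y) + (1/2) * ρ i t y * (v i t y) ^ 2 + (γ/2) * (q i t y) ^ 2))
      (∑ i ∈ Finset.range M, ∫ y in xp i..xp (i + 1),
        pt (fun s' z => W (ρ i s' z) + (1/2) * ρ i s' z * (v i s' z) ^ 2
          + (γ/2) * (q i s' z) ^ 2) s y) s := by
    intro s
    exact HasDerivAt.fun_sum fun i hi =>
      hasDerivAt_integral_param (hG1 i (Finset.mem_range.mp hi)) _ _ s
  have key : ∀ t ∈ Icc (0:ℝ) T,
      (∑ i ∈ Finset.range M, ∫ y in xp i..xp (i + 1),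
        pt (fun s' z => W (ρ i s' z) + (1/2) * ρ i s' z * (v i s' z) ^ 2
          + (γ/2) * (q i s' z) ^ 2) t y) = 0 := by
    intro t ht
    obtain ⟨hbv0, hbv1⟩ := hbv t ht
    obtain ⟨hbq0, hbq1⟩ := hbq t ht
    have hM1 : M - 1 + 1 = M := Nat.succ_pred_eq_of_pos hM
    have percell : ∀ i ∈ Finset.range M,
        (∫ y in xp i..xp (i + 1),
          pt (fun s' z => W (ρ i s' z) + (1/2) * ρ i s' z * (v i s' z) ^ 2
            + (γ/2) * (q i s' z) ^ 2) t y)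
        = -(∫ y in xp i..xp (i + 1),
              ((τ i t y - deriv W (ρ i t y) + γ * px (q i) t y
                - (1/2) * (v i t y) ^ 2) * pt (ρ i) t y))
          + (∫ y in xp i..xp (i + 1),
              ((pt (ρ i) t y + px (fun s z => ρ i s z * v i s z) t y) * τ i t y))
          + (∫ y in xp i..xp (i + 1),
              ((ρ i t y * pt (v i) t y
                + px (fun s z => ρ i s z * (v i s z) ^ 2) t y
                - px (fun s z => ρ i s z * v i s z) t y * v i t y
                + ρ i t y * px (τ i) t y
                - (1/2) * ρ i t y * px (fun s z => (v i s z) ^ 2) t y) * v i t y))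
          + γ * (∫ y in xp i..xp (i + 1),
              ((pt (q i) t y - pt (px (ρ i)) t y) * q i t y))
          - (∫ y in xp i..xp (i + 1),
              px (fun s z => ρ i s z * v i s z * τ i s z) t y)
          + γ * (∫ y in xp i..xp (i + 1),
              px (fun s z => q i s z * pt (ρ i) s z) t y) := by
      intro i hi
      have hi' := Finset.mem_range.mp hi
      have hρ2 := hρ i hi'
      have hv2 := hv i hi'
      have hτ2 := hτ i hi'
      have hq2 := hq i hi'
      have hρ1 := hρ2.of_le one_le_two
      have hv1 := hv2.of_le one_le_two
      have hτ1 := hτ2.of_le one_le_two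
      have hq1 := hq2.of_le one_le_two
      have cρ : Continuous (fun y => ρ i t y) := continuous_slice hρ1.continuous t
      have cv : Continuous (fun y => v i t y) := continuous_slice hv1.continuous t
      have cτ : Continuous (fun y => τ i t y) := continuous_slice hτ1.continuous t
      have cq : Continuous (fun y => q i t y) := continuous_slice hq1.continuous t
      have cW : Continuous (fun y => deriv W (ρ i t y)) :=
        (hW.continuous_deriv le_rfl).comp cρ
      have cPρ : Continuous (fun y => pt (ρ i) t y) :=
        continuous_slice (continuous_pt hρ1) t
      have cPv : Continuous (fun y => pt (v i) t y) :=
        continuous_slice (continuous_pt hv1) t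
      have cPq : Continuous (fun y => pt (q i) t y) :=
        continuous_slice (continuous_pt hq1) t
      have cXq : Continuous (fun y => px (q i) t y) :=
        continuous_slice (continuous_px' hq1) t
      have cXτ : Continuous (fun y => px (τ i) t y) :=
        continuous_slice (continuous_px' hτ1) t
      have cXρv : Continuous (fun y => px (fun s z => ρ i s z * v i s z) t y) :=
        continuous_slice (continuous_px' (hρ1.mul hv1)) t
      have cXρv2 : Continuous (fun y => px (fun s z => ρ i s z * (v i s z) ^ 2) t y) :=
        continuous_slice (continuous_px' (hρ1.mul (hv1.pow 2))) t
      have cXv2 : Continuous (fun y => px (fun s z => (v i s z) ^ 2) t y) :=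
        continuous_slice (continuous_px' (hv1.pow 2)) t
      have cPtPxρ : Continuous (fun y => pt (px (ρ i)) t y) :=
        continuous_slice (continuous_pt (contDiff_px hρ2)) t
      have cB1 : Continuous (fun y => px (fun s z => ρ i s z * v i s z * τ i s z) t y) :=
        continuous_slice (continuous_px' ((hρ1.mul hv1).mul hτ1)) t
      have cB2 : Continuous (fun y => px (fun s z => q i s z * pt (ρ i) s z) t y) :=
        continuous_slice (continuous_px' (hq1.mul (contDiff_pt hρ2))) t
      exact integral_comb
        (fun y => pointwise_identity W hW γ (ρ i) (v i) (τ i) (q i) hρ2 hv2 hτ2 hq2 t y)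
        ((((cτ.sub cW).add (continuous_const.mul cXq)).sub
            (continuous_const.mul (cv.pow 2))).mul cPρ)
        ((cPρ.add cXρv).mul cτ)
        ((((((cρ.mul cPv).add cXρv2).sub (cXρv.mul cv)).add (cρ.mul cXτ)).sub
            ((continuous_const.mul cρ).mul cXv2)).mul cv)
        ((cPq.sub cPtPxρ).mul cq) cB1 cB2
    have hB1 : ∑ i ∈ Finset.range M,
        (∫ y in xp i..xp (i + 1), px (fun s z => ρ i s z * v i s z * τ i s z) t y)
        = ∑ j ∈ Finset.Ico 1 M,
            (ρ (j - 1) t (xp j) * v (j - 1) t (xp j) * τ (j - 1) t (xp j)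
              - ρ j t (xp j) * v j t (xp j) * τ j t (xp j)) := by
      have step : ∀ i ∈ Finset.range M,
          (∫ y in xp i..xp (i + 1), px (fun s z => ρ i s z * v i s z * τ i s z) t y)
          = (fun k => ρ k t (xp (k + 1)) * v k t (xp (k + 1)) * τ k t (xp (k + 1))) i
            - (fun k => ρ k t (xp k) * v k t (xp k) * τ k t (xp k)) i := by
        intro i hi
        have hi' := Finset.mem_range.mp hi
        exact integral_px
          (((hρ i hi').of_le one_le_two).mul ((hv i hi').of_le one_le_two) |>.mul
            ((hτ i hi').of_le one_le_two)) t _ _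
      rw [Finset.sum_congr rfl step, telescope hM]
      have e1 : ρ (M - 1) t (xp (M - 1 + 1)) * v (M - 1) t (xp (M - 1 + 1))
          * τ (M - 1) t (xp (M - 1 + 1)) = 0 := by
        rw [hM1, hxM, hbv1, mul_zero, zero_mul]
      have e2 : ρ 0 t (xp 0) * v 0 t (xp 0) * τ 0 t (xp 0) = 0 := by
        rw [hx0, hbv0, mul_zero, zero_mul]
      rw [e1, e2]
      rw [zero_sub, neg_zero, zero_add]
      refine Finset.sum_congr rfl fun j hj => ?_
      have hj1 : j - 1 + 1 = j := by
        have := (Finset.mem_Ico.mp hj).1; omega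
      rw [hj1]
    have hB2 : ∑ i ∈ Finset.range M,
        (∫ y in xp i..xp (i + 1), px (fun s z => q i s z * pt (ρ i) s z) t y)
        = ∑ j ∈ Finset.Ico 1 M,
            (q (j - 1) t (xp j) * pt (ρ (j - 1)) t (xp j)
              - q j t (xp j) * pt (ρ j) t (xp j)) := by
      have step : ∀ i ∈ Finset.range M,
          (∫ y in xp i..xp (i + 1), px (fun s z => q i s z * pt (ρ i) s z) t y)
          = (fun k => q k t (xp (k + 1)) * pt (ρ k) t (xp (k + 1))) i
            - (fun k => q k t (xp k) * pt (ρ k) t (xp k)) i := by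
        intro i hi
        have hi' := Finset.mem_range.mp hi
        exact integral_px
          (((hq i hi').of_le one_le_two).mul (contDiff_pt (hρ i hi'))) t _ _
      rw [Finset.sum_congr rfl step, telescope hM]
      have e1 : q (M - 1) t (xp (M - 1 + 1)) * pt (ρ (M - 1)) t (xp (M - 1 + 1)) = 0 := by
        rw [hM1, hxM, hbq1, zero_mul]
      have e2 : q 0 t (xp 0) * pt (ρ 0) t (xp 0) = 0 := by
        rw [hx0, hbq0, zero_mul]
      rw [e1, e2]
      rw [zero_sub, neg_zero, zero_add]
      refine Finset.sum_congr rfl fun j hj => ?_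
      have hj1 : j - 1 + 1 = j := by
        have := (Finset.mem_Ico.mp hj).1; omega
      rw [hj1]
    rw [Finset.sum_congr rfl percell]
    simp only [Finset.sum_add_distrib, Finset.sum_sub_distrib, Finset.sum_neg_distrib,
      ← Finset.mul_sum]
    rw [h1 t ht, h2 t ht, h3 t ht, h4 t ht, hB1, hB2]
    simp only [Finset.mul_sum, mul_neg, ← Finset.sum_neg_distrib, ← Finset.sum_add_distrib,
      ← Finset.sum_sub_distrib]
    exact Finset.sum_eq_zero fun j hj => by ring
  have hcont : ContinuousOn
      (fun t => ∑ i ∈ Finset.range M, ∫ y in xp i..xp (i + 1),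
        (W (ρ i t y) + (1/2) * ρ i t y * (v i t y) ^ 2 + (γ/2) * (q i t y) ^ 2))
      (Icc 0 T) :=
    fun x _ => ((hEd x).differentiableAt.continuousAt).continuousWithinAt
  have hconst := constant_of_has_deriv_right_zero hcont (fun x hx => by
    have h := (hEd x).hasDerivWithinAt (s := Ici x)
    rwa [key x (Ico_subset_Icc_self hx)] at h)
  intro t ht
  exact hconst t ht
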